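/- Let R, R_a > 0 and let r_v be a real number with r_v ≥ R_a and r_v − R < R_a, and let v be a point of the plane with ‖v‖ = r_v. For every t with max(r_v − R, 0) ≤ t ≤ R_a, the two-dimensional Lebesgue measure of the set {x ∈ ℝ² : ‖x‖ ≤ t and ‖x − v‖ ≤ R} equals ∫_{max(r_v−R,0)}^{t} w(r) dr, where w(r) = 2r·arccos((r_v² − R² + r²)/(2·r_v·r)) if r + r_v > R, and w(r) = 2πr if r + r_v ≤ R. (Equivalently, a point chosen uniformly in the intersection of the disk of radius R_a about the origin and the disk of radius R about v has distance from the origin with unnormalized density w(r).) -/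

import Mathlib

open Real MeasureTheory

/-- Unnormalized density of the distance from the origin of a point chosen
uniformly in the intersection of the attack disk with the neighborhood disk of
a node at distance `r_v` from the center of attack. -/
noncomputable def w (R rv r : ℝ) : ℝ :=
  if R < r + rv then 2 * r * Real.arccos ((rv ^ 2 - R ^ 2 + r ^ 2) / (2 * rv * r))
  else 2 * π * r

open Set

lemma angle_eq (c : ℝ) (hc1 : -1 < c) (hc2 : c ≤ 1) :
    Ioo (-π) π ∩ {θ : ℝ | c ≤ Real.cos θ} = Icc (-(Real.arccos c)) (Real.arccos c) := by
  have hA0 : 0 ≤ arccos c := Real.arccos_nonneg c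
  have hAπ : arccos c < π := by
    rcases lt_or_eq_of_le (Real.arccos_le_pi c) with h | h
    · exact h
    · exact absurd (Real.arccos_eq_pi.mp h) (not_le.2 hc1)
  ext θ
  simp only [mem_inter_iff, mem_Ioo, mem_setOf_eq, mem_Icc]
  constructor
  · rintro ⟨⟨h1, h2⟩, h3⟩
    have habs : |θ| < π := abs_lt.2 ⟨h1, h2⟩
    have hcabs : c ≤ Real.cos |θ| := by rwa [Real.cos_abs]
    have : |θ| ≤ arccos c := by
      by_contra hcon
      push_neg at hcon
      have := Real.strictAntiOn_cos ⟨hA0, Real.arccos_le_pi c⟩ ⟨abs_nonneg θ, habs.le⟩ hcon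
      rw [Real.cos_arccos hc1.le hc2] at this
      linarith
    exact abs_le.mp this
  · rintro ⟨h1, h2⟩
    have habs : |θ| ≤ arccos c := abs_le.2 ⟨h1, h2⟩
    have h3 : c ≤ Real.cos θ := by
      rw [← Real.cos_abs, ← Real.cos_arccos hc1.le hc2]
      exact Real.cos_le_cos_of_nonneg_of_le_pi (abs_nonneg θ) (Real.arccos_le_pi c) habs
    have h4 := abs_lt.1 (lt_of_le_of_lt habs hAπ)
    exact ⟨⟨h4.1, h4.2⟩, h3⟩

lemma angle_vol (R rv r : ℝ) (hR : 0 < R) (hrv : 0 < rv) (hr : 0 < r) :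
    (volume (Ioo (-π) π ∩ {θ : ℝ | r ^ 2 - 2 * r * rv * Real.cos θ + rv ^ 2 ≤ R ^ 2})).toReal * r
      = w R rv r := by
  have h2rr : (0:ℝ) < 2 * rv * r := by positivity
  have hcond : {θ : ℝ | r ^ 2 - 2 * r * rv * Real.cos θ + rv ^ 2 ≤ R ^ 2}
      = {θ : ℝ | (rv ^ 2 - R ^ 2 + r ^ 2) / (2 * rv * r) ≤ Real.cos θ} := by
    ext θ
    rw [mem_setOf_eq, mem_setOf_eq, div_le_iff₀ h2rr]
    constructor <;> intro h <;> nlinarith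
  set c := (rv ^ 2 - R ^ 2 + r ^ 2) / (2 * rv * r) with hc
  rw [hcond, w]
  by_cases hcase : R < r + rv
  · rw [if_pos hcase]
    have hc1 : -1 < c := by rw [hc, lt_div_iff₀ h2rr]; nlinarith
    by_cases hcc : c ≤ 1
    · rw [angle_eq c hc1 hcc, Real.volume_Icc]
      rw [ENNReal.toReal_ofReal (by linarith [Real.arccos_nonneg c])]
      ring
    · have hempty : Ioo (-π) π ∩ {θ : ℝ | c ≤ Real.cos θ} = ∅ := by
        ext θ
        simp only [mem_inter_iff, mem_setOf_eq, mem_empty_iff_false, iff_false, not_and]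
        intro _
        push_neg at hcc ⊢
        exact lt_of_le_of_lt (Real.cos_le_one θ) hcc
      rw [hempty, measure_empty, ENNReal.toReal_zero, Real.arccos_eq_zero.2 (le_of_not_ge hcc)]
      ring
  · rw [if_neg hcase]
    push_neg at hcase
    have hfull : Ioo (-π) π ∩ {θ : ℝ | c ≤ Real.cos θ} = Ioo (-π) π := by
      apply inter_eq_left.2
      intro θ _
      rw [mem_setOf_eq, hc, div_le_iff₀ h2rr]
      nlinarith [Real.neg_one_le_cos θ]
    rw [hfull, Real.volume_Ioo, ENNReal.toReal_ofReal (by linarith [Real.pi_pos])]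
    ring

lemma w_measurable (R rv : ℝ) : Measurable (w R rv) := by
  unfold w
  apply Measurable.ite
  · exact measurableSet_lt measurable_const (measurable_id.add_const rv)
  · apply Measurable.mul
    · exact (measurable_const.mul measurable_id)
    · exact Real.continuous_arccos.measurable.comp
        ((measurable_const.add (measurable_id.pow_const 2)).div
          (measurable_const.mul measurable_id))
  · exact measurable_const.mul measurable_id

lemma w_bounds (R rv r : ℝ) (hr : 0 ≤ r) : 0 ≤ w R rv r ∧ w R rv r ≤ 2 * π * r := by
  unfold w
  split_ifs with h
  · have h1 := Real.arccos_nonneg ((rv ^ 2 - R ^ 2 + r ^ 2) / (2 * rv * r))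
    have h2 := Real.arccos_le_pi ((rv ^ 2 - R ^ 2 + r ^ 2) / (2 * rv * r))
    constructor <;> nlinarith
  · constructor
    · positivity
    · exact le_refl _
lemma w_intervalIntegrable (R rv a b Ra : ℝ) (h0 : 0 ≤ a) (hab : a ≤ b) (hb : b ≤ Ra) :
    IntervalIntegrable (w R rv) volume a b := by
  rw [intervalIntegrable_iff_integrableOn_Ioc_of_le hab]
  apply Integrable.mono' (g := fun _ => 2 * π * Ra)
  · exact integrableOn_const measure_Ioc_lt_top.ne
  · exact ((w_measurable R rv).aestronglyMeasurable).restrict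
  · rw [ae_restrict_iff' measurableSet_Ioc]
    filter_upwards with r hr
    have h1 := w_bounds R rv r (le_trans h0 hr.1.le)
    rw [Real.norm_eq_abs, abs_of_nonneg h1.1]
    have : r ≤ Ra := le_trans hr.2 hb
    nlinarith [Real.pi_pos, h1.2]

lemma complex_disk_inter (R rv t : ℝ) (hR : 0 < R) (hrv : 0 < rv) (ht : 0 ≤ t) :
    (volume {z : ℂ | ‖z‖ ≤ t ∧ ‖z - (rv:ℂ)‖ ≤ R}).toReal = ∫ r in Ioc (0:ℝ) t, w R rv r := by
  set T : Set ℂ := {z : ℂ | ‖z‖ ≤ t ∧ ‖z - (rv:ℂ)‖ ≤ R} with hT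
  have hTmeas : MeasurableSet T :=
    ((isClosed_le continuous_norm continuous_const).inter
      (isClosed_le ((continuous_id.sub continuous_const).norm) continuous_const)).measurableSet
  set U : Set (ℝ × ℝ) :=
    {p : ℝ × ℝ | p.1 ≤ t ∧ p.1 ^ 2 - 2 * p.1 * rv * Real.cos p.2 + rv ^ 2 ≤ R ^ 2} with hU
  have hUmeas : MeasurableSet U := by
    have : U = {p : ℝ × ℝ | p.1 ≤ t}
        ∩ {p : ℝ × ℝ | p.1 ^ 2 - 2 * p.1 * rv * Real.cos p.2 + rv ^ 2 ≤ R ^ 2} := rfl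
    rw [this]
    exact (measurableSet_le measurable_fst measurable_const).inter
      (measurableSet_le (by fun_prop) measurable_const)
  -- membership transfer
  have hmem : ∀ p : ℝ × ℝ, p ∈ Ioi (0:ℝ) ×ˢ Ioo (-π) π →
      (Complex.polarCoord.symm p ∈ T ↔ p ∈ U) := by
    rintro ⟨r, θ⟩ ⟨hr, hθ⟩
    simp only [mem_Ioi] at hr
    set z := Complex.polarCoord.symm (r, θ) with hz
    have habs : ‖z‖ = r := by
      rw [hz, Complex.norm_polarCoord_symm, abs_of_pos hr]
    have hre : z.re = r * Real.cos θ := by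
      rw [hz, Complex.polarCoord_symm_apply]; simp [Complex.cos_ofReal_re]
    have him : z.im = r * Real.sin θ := by
      rw [hz, Complex.polarCoord_symm_apply]; simp [Complex.sin_ofReal_re]
    have hsq : ‖z - (rv:ℂ)‖ ^ 2 = r ^ 2 - 2 * r * rv * Real.cos θ + rv ^ 2 := by
      rw [Complex.sq_norm, Complex.normSq_apply, Complex.sub_re,
        Complex.sub_im, Complex.ofReal_re, Complex.ofReal_im, hre, him]
      have := Real.sin_sq_add_cos_sq θ
      nlinarith
    constructor
    · rintro ⟨h1, h2⟩
      refine ⟨by rwa [habs] at h1, ?_⟩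
      rw [← hsq]
      exact pow_le_pow_left₀ (norm_nonneg _) h2 2
    · rintro ⟨h1, h2⟩
      refine ⟨by rwa [habs], ?_⟩
      have : ‖z - (rv:ℂ)‖ ^ 2 ≤ R ^ 2 := by rw [hsq]; exact h2
      exact le_of_pow_le_pow_left₀ two_ne_zero hR.le this
  -- main computation
  rw [← measureReal_def, ← integral_indicator_one hTmeas, ← Complex.integral_comp_polarCoord_symm, polarCoord_target]
  have hcongr : ∫ p in Ioi (0:ℝ) ×ˢ Ioo (-π) π, p.1 • T.indicator 1 (Complex.polarCoord.symm p)
      = ∫ p in Ioi (0:ℝ) ×ˢ Ioo (-π) π, U.indicator (fun q : ℝ × ℝ => q.1) p := by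
    apply setIntegral_congr_fun (measurableSet_Ioi.prod measurableSet_Ioo)
    intro p hp
    simp only [Set.indicator_apply, Pi.one_apply, smul_eq_mul]
    by_cases hpU : p ∈ U
    · rw [if_pos ((hmem p hp).2 hpU), if_pos hpU, mul_one]
    · rw [if_neg (fun h => hpU ((hmem p hp).1 h)), if_neg hpU, mul_zero]
  rw [hcongr, Measure.volume_eq_prod]
  have hint : IntegrableOn (fun q : ℝ × ℝ => U.indicator (fun q : ℝ × ℝ => q.1) q)
      (Ioi (0:ℝ) ×ˢ Ioo (-π) π) (volume.prod volume) := by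
    apply Integrable.mono'
      (g := fun p : ℝ × ℝ => (Ioc (0:ℝ) t ×ˢ Ioo (-π) π).indicator (fun _ => t) p)
    · apply Integrable.integrableOn
      rw [integrable_indicator_iff (measurableSet_Ioc.prod measurableSet_Ioo)]
      refine integrableOn_const (ne_of_lt ?_)
      rw [Measure.prod_prod, Real.volume_Ioc, Real.volume_Ioo]
      exact ENNReal.mul_lt_top ENNReal.ofReal_lt_top ENNReal.ofReal_lt_top
    · exact ((measurable_fst.indicator hUmeas).aestronglyMeasurable).restrict
    · rw [ae_restrict_iff' (measurableSet_Ioi.prod measurableSet_Ioo)]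
      filter_upwards with p hp
      by_cases hpU : p ∈ U
      · rw [indicator_of_mem hpU, Real.norm_eq_abs, abs_of_pos hp.1,
          indicator_of_mem (show p ∈ Ioc (0:ℝ) t ×ˢ Ioo (-π) π from ⟨⟨hp.1, hpU.1⟩, hp.2⟩)]
        exact hpU.1
      · rw [indicator_of_notMem hpU]
        simp only [norm_zero]
        exact indicator_nonneg (fun _ _ => ht) _
  rw [setIntegral_prod _ hint]
  have hinner : ∀ r ∈ Ioi (0:ℝ),
      (∫ θ in Ioo (-π) π, U.indicator (fun q : ℝ × ℝ => q.1) (r, θ))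
        = (Iic t).indicator (w R rv) r := by
    intro r hr
    rw [mem_Ioi] at hr
    by_cases hrt : r ≤ t
    · have heq : ∀ θ : ℝ, U.indicator (fun q : ℝ × ℝ => q.1) (r, θ)
          = ({θ : ℝ | r ^ 2 - 2 * r * rv * Real.cos θ + rv ^ 2 ≤ R ^ 2}).indicator
              (fun _ => r) θ := by
        intro θ
        simp only [Set.indicator_apply, hU, mem_setOf_eq]
        by_cases hc : r ^ 2 - 2 * r * rv * Real.cos θ + rv ^ 2 ≤ R ^ 2
        · rw [if_pos ⟨hrt, hc⟩, if_pos hc]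
        · rw [if_neg (fun h => hc h.2), if_neg hc]
      rw [setIntegral_congr_fun measurableSet_Ioo (fun θ _ => heq θ),
        setIntegral_indicator (measurableSet_le (by fun_prop) measurable_const),
        setIntegral_const, smul_eq_mul, indicator_of_mem (mem_Iic.2 hrt)]
      exact angle_vol R rv r hR hrv hr
    · have heq : ∀ θ : ℝ, U.indicator (fun q : ℝ × ℝ => q.1) (r, θ) = 0 := by
        intro θ
        exact indicator_of_notMem (fun h => hrt h.1) _
      rw [setIntegral_congr_fun measurableSet_Ioo (fun θ _ => heq θ), integral_zero,
        indicator_of_notMem (fun h => hrt (mem_Iic.1 h))]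
  rw [setIntegral_congr_fun measurableSet_Ioi hinner,
    setIntegral_indicator measurableSet_Iic, Ioi_inter_Iic]

theorem intersection_area_as_integral (R Ra rv : ℝ) (hR : 0 < R) (hRa : 0 < Ra)
    (h₁ : Ra ≤ rv) (h₂ : rv - R < Ra) (v : EuclideanSpace ℝ (Fin 2)) (hv : ‖v‖ = rv) :
    ∀ t : ℝ, max (rv - R) 0 ≤ t → t ≤ Ra →
      (volume {x : EuclideanSpace ℝ (Fin 2) | ‖x‖ ≤ t ∧ ‖x - v‖ ≤ R}).toReal =
        ∫ r in (max (rv - R) 0)..t, w R rv r := by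
  intro t hmt htRa
  have ht0 : 0 ≤ t := le_trans (le_max_right _ _) hmt
  have hrv : 0 < rv := lt_of_lt_of_le hRa h₁
  have hTmeas : MeasurableSet {z : ℂ | ‖z‖ ≤ t ∧ ‖z - (rv:ℂ)‖ ≤ R} :=
    ((isClosed_le continuous_norm continuous_const).inter
      (isClosed_le ((continuous_id.sub continuous_const).norm) continuous_const)).measurableSet
  have hvolT : volume {x : EuclideanSpace ℝ (Fin 2) | ‖x‖ ≤ t ∧ ‖x - v‖ ≤ R}
      = volume {z : ℂ | ‖z‖ ≤ t ∧ ‖z - (rv:ℂ)‖ ≤ R} := by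
    set e := Complex.orthonormalBasisOneI.repr with he
    set u : ℂ := e.symm v with hu
    have hnu : ‖u‖ = ‖(rv:ℂ)‖ := by
      rw [hu, LinearIsometryEquiv.norm_map, hv, Complex.norm_real, Real.norm_of_nonneg hrv.le]
    set ρ := Submodule.reflection (ℝ ∙ (u - (rv:ℂ)))ᗮ with hρ
    have hρu : ρ u = (rv:ℂ) := Submodule.reflection_sub hnu
    set Ψ : EuclideanSpace ℝ (Fin 2) ≃ₗᵢ[ℝ] ℂ := e.symm.trans ρ with hΨ
    have hS : {x : EuclideanSpace ℝ (Fin 2) | ‖x‖ ≤ t ∧ ‖x - v‖ ≤ R}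
        = Ψ ⁻¹' {z : ℂ | ‖z‖ ≤ t ∧ ‖z - (rv:ℂ)‖ ≤ R} := by
      ext x
      simp only [Set.mem_setOf_eq, Set.mem_preimage]
      have h1 : ‖Ψ x‖ = ‖x‖ := Ψ.norm_map x
      have h2 : ‖Ψ x - (rv:ℂ)‖ = ‖x - v‖ := by
        have hΨv : Ψ v = ρ u := rfl
        rw [← hρu, ← hΨv, ← map_sub, Ψ.norm_map]
      rw [h1, h2]
    rw [hS, (Ψ.measurePreserving).measure_preimage hTmeas.nullMeasurableSet]
  rw [hvolT, complex_disk_inter R rv t hR hrv ht0, ← intervalIntegral.integral_of_le ht0]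
  set m := max (rv - R) 0 with hmdef
  have hm0 : 0 ≤ m := le_max_right _ _
  have hi1 : IntervalIntegrable (w R rv) volume 0 m :=
    w_intervalIntegrable R rv 0 m Ra le_rfl hm0 (le_trans hmt htRa)
  have hi2 : IntervalIntegrable (w R rv) volume m t :=
    w_intervalIntegrable R rv m t Ra hm0 hmt htRa
  have hzero : ∫ r in (0:ℝ)..m, w R rv r = 0 := by
    rcases le_or_gt (rv - R) 0 with h | h
    · rw [show m = 0 from max_eq_right h, intervalIntegral.integral_same]
    · have hm : m = rv - R := max_eq_left h.le
      have heq : ∀ r ∈ Ioc (0:ℝ) m, w R rv r = (0:ℝ) := by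
        intro r hr
        have hr0 : 0 < r := hr.1
        have hrm : r ≤ rv - R := hm ▸ hr.2
        have hcase : R < r + rv := by nlinarith
        rw [w, if_pos hcase]
        have h1 : (1:ℝ) ≤ (rv ^ 2 - R ^ 2 + r ^ 2) / (2 * rv * r) := by
          rw [le_div_iff₀ (by positivity)]
          nlinarith
        rw [Real.arccos_eq_zero.2 h1, mul_zero]
      rw [intervalIntegral.integral_of_le hm0,
        setIntegral_congr_fun measurableSet_Ioc heq, integral_zero]
  rw [← intervalIntegral.integral_add_adjacent_intervals hi1 hi2, hzero, zero_add]
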